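/- A neural code C is intersection-complete if and only if the assignment σ ↦ Tk_C(σ) defines a bijection between codewords of C and nonempty trunks in C. -/

import Mathlib

open Finset

/-- The trunk of `σ` in the code `C`. -/
def trunk (C : Finset (Finset ℕ)) (σ : Finset ℕ) : Finset (Finset ℕ) :=
  C.filter (fun c => σ ⊆ c)

/-- `T` is a proper trunk of the code `C`: a nonempty trunk not equal to `C`. -/
def IsProperTrunkOf (T C : Finset (Finset ℕ)) : Prop :=
  (∃ σ, T = trunk C σ) ∧ T.Nonempty ∧ T ≠ C

/-- `f` is a morphism of codes from `C` to `D`. -/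
def IsMorphism (C D : Finset (Finset ℕ)) (f : Finset ℕ → Finset ℕ) : Prop :=
  (∀ c ∈ C, f c ∈ D) ∧
  ∀ T, IsProperTrunkOf T D → IsProperTrunkOf (C.filter (fun c => f c ∈ T)) C

/-- A code is intersection-complete if closed under pairwise intersections. -/
def IntComplete (C : Finset (Finset ℕ)) : Prop := ∀ a ∈ C, ∀ b ∈ C, a ∩ b ∈ C

/-- `I` is an isolated subset of `C` with minimal element `μ`. -/
def IsIsolated (C I : Finset (Finset ℕ)) (μ : Finset ℕ) : Prop :=
  I.Nonempty ∧ I ⊆ C ∧ IntComplete I ∧ μ ∈ I ∧ (∀ a ∈ I, μ ⊆ a) ∧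
  ∀ c ∈ C, c ∉ I → ∀ τ ∈ I, τ ≠ μ → ¬ τ ⊆ c

lemma mem_trunk_iff {C : Finset (Finset ℕ)} {σ c : Finset ℕ} :
    c ∈ trunk C σ ↔ c ∈ C ∧ σ ⊆ c := by
  simp [trunk]

lemma inf'_mem_of_intComplete {C T : Finset (Finset ℕ)} (hIC : IntComplete C)
    (hT : T.Nonempty) (hsub : ∀ x ∈ T, x ∈ C) : T.inf' hT id ∈ C := by
  induction hT using Finset.Nonempty.cons_induction with
  | singleton a => simpa using hsub a (by simp)
  | cons a s ha hs ih =>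
      rw [Finset.inf'_cons hs]
      exact hIC a (hsub a (by simp)) _ (ih (fun x hx => hsub x (by simp [hx])))

theorem intComplete_iff_trunk_bijection (C : Finset (Finset ℕ)) :
    IntComplete C ↔
      Set.BijOn (fun σ => trunk C σ) (↑C)
        {T : Finset (Finset ℕ) | (∃ σ, T = trunk C σ) ∧ T.Nonempty} := by
  constructor
  · intro hIC
    refine ⟨fun c hc => ⟨⟨c, rfl⟩, ⟨c, mem_trunk_iff.2 ⟨hc, subset_rfl⟩⟩⟩, ?_, ?_⟩
    · intro a ha b hb hab
      simp only at hab
      have h1 : a ∈ trunk C b := hab ▸ mem_trunk_iff.2 ⟨ha, subset_rfl⟩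
      have h2 : b ∈ trunk C a := hab ▸ mem_trunk_iff.2 ⟨hb, subset_rfl⟩
      exact subset_antisymm (mem_trunk_iff.1 h2).2 (mem_trunk_iff.1 h1).2
    · rintro T ⟨⟨σ, rfl⟩, hne⟩
      -- take the intersection of all elements of the trunk
      set T := trunk C σ with hT
      have hneT : T.Nonempty := hne
      set c := T.inf' hneT id with hc
      have hcC : c ∈ C :=
        inf'_mem_of_intComplete hIC hneT (fun x hx => (mem_trunk_iff.1 hx).1)
      refine ⟨c, hcC, ?_⟩
      simp only
      apply Finset.ext
      intro x
      rw [mem_trunk_iff, hT, mem_trunk_iff]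
      constructor
      · rintro ⟨hxC, hcx⟩
        refine ⟨hxC, subset_trans ?_ hcx⟩
        rw [hc]
        exact Finset.le_inf' _ _ (fun b hb => (mem_trunk_iff.1 hb).2)
      · rintro ⟨hxC, hsx⟩
        refine ⟨hxC, ?_⟩
        rw [hc]
        exact Finset.inf'_le id (mem_trunk_iff.2 ⟨hxC, hsx⟩)
  · rintro ⟨_, _, hsurj⟩ a ha b hb
    have hmem : trunk C (a ∩ b) ∈
        {T : Finset (Finset ℕ) | (∃ σ, T = trunk C σ) ∧ T.Nonempty} :=
      ⟨⟨a ∩ b, rfl⟩, ⟨a, mem_trunk_iff.2 ⟨ha, Finset.inter_subset_left⟩⟩⟩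
    obtain ⟨c, hcC, hc⟩ := hsurj hmem
    simp only at hc
    have hcc : c ∈ trunk C (a ∩ b) := hc ▸ mem_trunk_iff.2 ⟨hcC, subset_rfl⟩
    have hab : a ∩ b ⊆ c := (mem_trunk_iff.1 hcc).2
    have hac : c ⊆ a := (mem_trunk_iff.1 (hc.symm ▸
      mem_trunk_iff.2 ⟨ha, Finset.inter_subset_left⟩ : a ∈ trunk C c)).2
    have hbc : c ⊆ b := (mem_trunk_iff.1 (hc.symm ▸
      mem_trunk_iff.2 ⟨hb, Finset.inter_subset_right⟩ : b ∈ trunk C c)).2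
    have : c = a ∩ b := subset_antisymm (Finset.subset_inter hac hbc) hab
    rwa [← this]
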